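/- For θ ∈ (0,π), the quaternionic matrix A = [[e^{iθ}, 1],[0, e^{iθ}]] is not strongly reversible in SL(2,ℍ): there is no g ∈ SL(2,ℍ) with g² = I and gAg⁻¹ = A⁻¹. -/

import Mathlib

/-- The quaternion `cos θ + (sin θ) i`, i.e. `e^{iθ}` inside the quaternions. -/
noncomputable def eI (θ : ℝ) : Quaternion ℝ := ⟨Real.cos θ, Real.sin θ, 0, 0⟩

/-- The quaternion unit `j`. -/
def qj : Quaternion ℝ := ⟨0, 0, 1, 0⟩

/-- The standard complex embedding `Φ` of a 2×2 quaternionic matrix `A = A₁ + A₂ j`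
as the 4×4 complex block matrix `[[A₁, A₂], [-conj A₂, conj A₁]]`. -/
noncomputable def Phi (A : Matrix (Fin 2) (Fin 2) (Quaternion ℝ)) :
    Matrix (Fin 2 ⊕ Fin 2) (Fin 2 ⊕ Fin 2) ℂ :=
  Matrix.fromBlocks
    (A.map fun q => (⟨q.re, q.imI⟩ : ℂ))
    (A.map fun q => (⟨q.imJ, q.imK⟩ : ℂ))
    (-(A.map fun q => (⟨q.imJ, -q.imK⟩ : ℂ)))
    (A.map fun q => (⟨q.re, -q.imI⟩ : ℂ))

/-- The quaternionic determinant: the determinant of the complex embedding. -/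
noncomputable def detH (A : Matrix (Fin 2) (Fin 2) (Quaternion ℝ)) : ℂ := (Phi A).det

set_option maxHeartbeats 2000000 in
/-- The parabolic [[e^{iθ},1],[0,e^{iθ}]] with θ ∈ (0,π) is not strongly reversible in
SL(2,ℍ): no involution g in SL(2,ℍ) (so g⁻¹ = g) conjugates it to its inverse. -/
theorem not_strongly_reversible_parabolic (θ : ℝ) (hθ : θ ∈ Set.Ioo 0 Real.pi) :
    ¬ ∃ g B : Matrix (Fin 2) (Fin 2) (Quaternion ℝ),
        detH g = 1 ∧ g * g = 1 ∧
        !![eI θ, 1; 0, eI θ] * B = 1 ∧ B * !![eI θ, 1; 0, eI θ] = 1 ∧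
        g * !![eI θ, 1; 0, eI θ] * g = B := by
  rintro ⟨g, B, _, hg, h1, _, h3⟩
  have hs : 0 < Real.sin θ := Real.sin_pos_of_pos_of_lt_pi hθ.1 hθ.2
  have hsc : Real.sin θ ^ 2 + Real.cos θ ^ 2 = 1 := Real.sin_sq_add_cos_sq θ
  have h2s : (-2 : ℝ) * Real.sin θ ≠ 0 := by nlinarith
  have h2s' : (2 : ℝ) * Real.sin θ ≠ 0 := by nlinarith
  set A := !![eI θ, 1; 0, eI θ] with hA
  have hE : A * g * A = g := by
    have hAB : A * (g * A * g) = 1 := by rw [h3]; exact h1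
    calc A * g * A = A * g * A * (g * g) := by rw [hg, mul_one]
      _ = A * (g * A * g) * g := by noncomm_ring
      _ = g := by rw [hAB, one_mul]
  have h10 : eI θ * g 1 0 * eI θ = g 1 0 := by
    have := congrFun (congrFun hE 1) 0
    simpa [hA, Matrix.mul_apply, Matrix.vecMul, dotProduct, Fin.sum_univ_two] using this
  have h11 : eI θ * g 1 0 + eI θ * g 1 1 * eI θ = g 1 1 := by
    have := congrFun (congrFun hE 1) 1
    simpa [hA, Matrix.mul_apply, Matrix.vecMul, dotProduct, Fin.sum_univ_two] using this
  have hg11 : g 1 0 * g 0 1 + g 1 1 * g 1 1 = 1 := by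
    have := congrFun (congrFun hg 1) 1
    simpa [Matrix.mul_apply, Fin.sum_univ_two, Matrix.one_apply] using this
  set x := g 1 0 with hxd
  set y := g 1 1 with hyd
  set s := Real.sin θ
  set c := Real.cos θ
  have e1 : (eI θ * x * eI θ).re = x.re := congrArg QuaternionAlgebra.re h10
  have e2 : (eI θ * x * eI θ).imI = x.imI := congrArg QuaternionAlgebra.imI h10
  have e3 : (eI θ * x + eI θ * y * eI θ).re = y.re := congrArg QuaternionAlgebra.re h11
  have e4 : (eI θ * x + eI θ * y * eI θ).imI = y.imI := congrArg QuaternionAlgebra.imI h11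
  have e5 : (eI θ * x + eI θ * y * eI θ).imJ = y.imJ := congrArg QuaternionAlgebra.imJ h11
  have e6 : (eI θ * x + eI θ * y * eI θ).imK = y.imK := congrArg QuaternionAlgebra.imK h11
  simp only [Quaternion.re_mul, Quaternion.imI_mul, Quaternion.imJ_mul, Quaternion.imK_mul,
    Quaternion.re_add, Quaternion.imI_add, Quaternion.imJ_add, Quaternion.imK_add]
    at e1 e2 e3 e4 e5 e6
  simp only [eI] at e1 e2 e3 e4 e5 e6
  have key1 : s * x.re + c * x.imI = 0 := by
    apply mul_left_cancel₀ h2s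
    linear_combination e1 - x.re * hsc
  have key2 : c * x.re - s * x.imI = 0 := by
    apply mul_left_cancel₀ h2s'
    linear_combination e2 - x.imI * hsc
  have hp : x.re = 0 := by linear_combination s * key1 + c * key2 - x.re * hsc
  have hq : x.imI = 0 := by linear_combination c * key1 - s * key2 - x.imI * hsc
  have key3 : c * x.imJ - s * x.imK = 0 := by linear_combination e5 - y.imJ * hsc
  have key4 : s * x.imJ + c * x.imK = 0 := by linear_combination e6 - y.imK * hsc
  have hr : x.imJ = 0 := by linear_combination c * key3 + s * key4 - x.imJ * hsc
  have ht : x.imK = 0 := by linear_combination (-s) * key3 + c * key4 - x.imK * hsc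
  have key5 : s * y.re + c * y.imI = 0 := by
    apply mul_left_cancel₀ h2s
    linear_combination e3 - y.re * hsc - c * hp + s * hq
  have key6 : c * y.re - s * y.imI = 0 := by
    apply mul_left_cancel₀ h2s'
    linear_combination e4 - y.imI * hsc - s * hp - c * hq
  have hP : y.re = 0 := by linear_combination s * key5 + c * key6 - y.re * hsc
  have hQ : y.imI = 0 := by linear_combination c * key5 - s * key6 - y.imI * hsc
  have efin : (x * g 0 1 + y * y).re = 1 := by rw [hg11]; rfl
  simp only [Quaternion.re_mul, Quaternion.re_add, hp, hq, hr, ht, hP, hQ] at efin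
  nlinarith [sq_nonneg y.imJ, sq_nonneg y.imK]
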